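/- If a commutative real POVM F admits a strong Feller Markov kernel representation F(Δ) = ∫ μ_Δ(λ) dE_λ with respect to a PVM E on a compact set, where λ ↦ μ_Δ(λ) is continuous for every Borel set Δ, then F is uniformly continuous. -/

import Mathlib

open MeasureTheory Filter Topology

local notation "⟪" x ", " y "⟫" => @inner ℂ _ _ x y

variable {H : Type*} [NormedAddCommGroup H] [InnerProductSpace ℂ H] [CompleteSpace H]

/-- A normalized POVM on the Borel sets of `ℝ`. -/
def IsPOVM (F : Set ℝ → H →L[ℂ] H) : Prop :=
  (∀ Δ, MeasurableSet Δ → IsSelfAdjoint (F Δ)) ∧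
  (∀ Δ, MeasurableSet Δ → ∀ x : H, 0 ≤ (⟪x, F Δ x⟫).re) ∧
  (∀ Δ : ℕ → Set ℝ, (∀ i, MeasurableSet (Δ i)) → Pairwise (Function.onFun Disjoint Δ) →
    ∀ x : H, Tendsto (fun n => ∑ i ∈ Finset.range n, ⟪x, F (Δ i) x⟫)
      atTop (𝓝 ⟪x, F (⋃ i, Δ i) x⟫)) ∧
  F Set.univ = 1

/-- Uniform continuity at `Δ`: partial sums of any disjoint decomposition converge
in operator norm. -/
def UnifContAt (F : Set ℝ → H →L[ℂ] H) (Δ : Set ℝ) : Prop :=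
  ∀ Δi : ℕ → Set ℝ, (∀ i, MeasurableSet (Δi i)) → Pairwise (Function.onFun Disjoint Δi) →
    (⋃ i, Δi i) = Δ →
    Tendsto (fun n => ∑ i ∈ Finset.range n, F (Δi i)) atTop (𝓝 (F Δ))

/-- The value of a POVM at the empty set is weakly zero. -/
lemma povm_inner_empty (F : Set ℝ → H →L[ℂ] H) (hF : IsPOVM F) (x : H) :
    ⟪x, F (∅ : Set ℝ) x⟫ = 0 := by
  have h := hF.2.2.1 (fun _ => (∅ : Set ℝ)) (fun _ => MeasurableSet.empty)
    (fun i j hij => by simp [Function.onFun]) x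
  set c := ⟪x, F (∅ : Set ℝ) x⟫ with hc
  have h' : Tendsto (fun n : ℕ => (n : ℂ) * c) atTop (𝓝 c) := by
    simpa [Finset.sum_const, nsmul_eq_mul, Set.iUnion_empty] using h
  have h2 : Tendsto (fun n : ℕ => ((n : ℂ) + 1) * c) atTop (𝓝 c) := by
    have := h'.comp (tendsto_add_atTop_nat 1)
    simpa [Function.comp_def, push_cast] using this
  have h3 : Tendsto (fun _ : ℕ => c) atTop (𝓝 (c - c)) := by
    have := h2.sub h'
    simpa [add_mul, one_mul, add_sub_cancel_left] using this
  rw [sub_self] at h3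
  exact tendsto_nhds_unique tendsto_const_nhds h3

/-- Binary additivity of a POVM. -/
lemma povm_add (F : Set ℝ → H →L[ℂ] H) (hF : IsPOVM F) {A B : Set ℝ}
    (hA : MeasurableSet A) (hB : MeasurableSet B) (hAB : Disjoint A B) :
    F (A ∪ B) = F A + F B := by
  set f : ℕ → Set ℝ := fun n => if n = 0 then A else if n = 1 then B else ∅ with hf
  have hfm : ∀ i, MeasurableSet (f i) := by
    intro i; simp only [hf]; split_ifs <;> simp [hA, hB]
  have hfd : Pairwise (Function.onFun Disjoint f) := by
    intro i j hij
    simp only [Function.onFun, hf]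
    split_ifs <;> simp_all [hAB, hAB.symm]
  have hfU : (⋃ i, f i) = A ∪ B := by
    apply Set.Subset.antisymm
    · refine Set.iUnion_subset fun i => ?_
      simp only [hf]; split_ifs <;> simp
    · refine Set.union_subset ?_ ?_
      · exact le_trans (by simp [hf]) (Set.subset_iUnion f 0)
      · exact le_trans (by simp [hf]) (Set.subset_iUnion f 1)
  have key : ∀ x : H, ⟪x, F (A ∪ B) x⟫ = ⟪x, F A x⟫ + ⟪x, F B x⟫ := by
    intro x
    have h := hF.2.2.1 f hfm hfd x
    rw [hfU] at h
    have hev : (fun n => ∑ i ∈ Finset.range n, ⟪x, F (f i) x⟫) =ᶠ[atTop]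
        (fun _ => ⟪x, F A x⟫ + ⟪x, F B x⟫) := by
      filter_upwards [eventually_ge_atTop 2] with n hn
      have hsub : Finset.range 2 ⊆ Finset.range n := Finset.range_subset_range.2 hn
      rw [← Finset.sum_subset hsub]
      · simp [hf, Finset.sum_range_succ]
      · intro i _ hi
        simp only [Finset.mem_range, not_lt] at hi
        have h1 : i ≠ 0 := by omega
        have h2 : i ≠ 1 := by omega
        simp [hf, h1, h2, povm_inner_empty F hF x]
    exact tendsto_nhds_unique h (tendsto_const_nhds.congr' hev.symm)
  have hz : (((F (A ∪ B) - (F A + F B)) : H →L[ℂ] H) : H →ₗ[ℂ] H) = 0 := by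
    rw [← inner_map_self_eq_zero]
    intro x
    have hx : ⟪x, (F (A ∪ B) - (F A + F B)) x⟫ = 0 := by
      simp only [ContinuousLinearMap.sub_apply, ContinuousLinearMap.add_apply,
        inner_sub_right, inner_add_right, key x]
      ring
    simp only [ContinuousLinearMap.coe_coe]
    rw [← inner_conj_symm, hx, map_zero]
  have h0 : F (A ∪ B) - (F A + F B) = 0 := by
    ext x
    have := LinearMap.congr_fun hz x
    simpa using this
  exact sub_eq_zero.mp h0


/-- a commutative real POVM which is the smearing of a PVM `E` on a compact
set `Λ` via a strong Feller Markov kernel `μ` (i.e. `λ ↦ μ Δ λ` is continuous for every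
Borel `Δ`) is uniformly continuous. The representation `F Δ = ∫ μ_Δ(λ) dE_λ` is expressed
weakly: `⟨x, F(Δ) x⟩ = ∫ μ_Δ(λ) d⟨x, E(·) x⟩` for every `x`, where `ν x` is the
spectral measure `Δ ↦ ⟨x, E(Δ) x⟩` of `E` at `x`. -/
theorem unifCont_of_strong_feller_kernel (F : Set ℝ → H →L[ℂ] H) (hF : IsPOVM F)
    (hcomm : ∀ Δ₁ Δ₂ : Set ℝ, MeasurableSet Δ₁ → MeasurableSet Δ₂ →
      F Δ₁ * F Δ₂ = F Δ₂ * F Δ₁)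
    (Λ : Set ℝ) (hΛ : IsCompact Λ)
    -- the PVM `E`
    (E : Set ℝ → H →L[ℂ] H) (hE : IsPOVM E)
    (hproj : ∀ Δ : Set ℝ, MeasurableSet Δ → E Δ * E Δ = E Δ)
    (hEΛ : E Λ = 1)
    -- the spectral measures `ν x = ⟨x, E(·) x⟩`
    (ν : H → Measure ℝ)
    (hν : ∀ (x : H) (Δ : Set ℝ), MeasurableSet Δ →
      ν x Δ = ENNReal.ofReal ((⟪x, E Δ x⟫).re))
    -- the Markov kernel `μ`
    (μ : Set ℝ → ℝ → ℝ)
    (hμmeas : ∀ Δ : Set ℝ, MeasurableSet Δ → Measurable (μ Δ))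
    (P : ℝ → Measure ℝ) (hP : ∀ lam : ℝ, IsProbabilityMeasure (P lam))
    (hμP : ∀ (lam : ℝ) (Δ : Set ℝ), MeasurableSet Δ → μ Δ lam = (P lam Δ).toReal)
    -- the strong Feller property
    (hfeller : ∀ Δ : Set ℝ, MeasurableSet Δ → Continuous (μ Δ))
    -- the smearing representation `F Δ = ∫_Λ μ_Δ(λ) dE_λ`
    (hrep : ∀ (Δ : Set ℝ), MeasurableSet Δ → ∀ x : H,
      (⟪x, F Δ x⟫).re = ∫ lam in Λ, μ Δ lam ∂(ν x)) :
    ∀ Δ : Set ℝ, MeasurableSet Δ → UnifContAt F Δ := by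
  intro Δ hΔ Δi hmeas hdisj hUnion
  -- the tails
  set G : ℕ → Set ℝ := fun n => ⋃ i, ⋃ (_ : n ≤ i), Δi i with hG
  have hGmeas : ∀ n, MeasurableSet (G n) :=
    fun n => MeasurableSet.iUnion fun i => MeasurableSet.iUnion fun _ => hmeas i
  have hGanti : Antitone G := by
    intro m n hmn lam hlam
    simp only [hG, Set.mem_iUnion] at hlam ⊢
    obtain ⟨i, hi, h⟩ := hlam
    exact ⟨i, le_trans hmn hi, h⟩
  have hG0 : G 0 = Δ := by
    rw [← hUnion]
    ext lam
    simp [hG, Nat.zero_le]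
  have hGsucc : ∀ n, G n = Δi n ∪ G (n + 1) := by
    intro n
    ext lam
    simp only [hG, Set.mem_iUnion, Set.mem_union]
    constructor
    · rintro ⟨i, hi, h⟩
      rcases eq_or_lt_of_le hi with rfl | hlt
      · exact Or.inl h
      · exact Or.inr ⟨i, hlt, h⟩
    · rintro (h | ⟨i, hi, h⟩)
      · exact ⟨n, le_rfl, h⟩
      · exact ⟨i, by omega, h⟩
  have hGdisj : ∀ n, Disjoint (Δi n) (G (n + 1)) := by
    intro n
    rw [Set.disjoint_left]
    intro lam h hmem
    simp only [hG, Set.mem_iUnion] at hmem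
    obtain ⟨i, hi, h'⟩ := hmem
    exact Set.disjoint_left.mp (hdisj (by omega : n ≠ i)) h h'
  have hGempty : (⋂ n, G n) = ∅ := by
    rw [Set.eq_empty_iff_forall_notMem]
    intro lam hlam
    simp only [Set.mem_iInter] at hlam
    have h0 : ∃ i, lam ∈ Δi i := by simpa [hG] using hlam 0
    obtain ⟨i₀, h₀⟩ := h0
    have h1 : ∃ i, i₀ + 1 ≤ i ∧ lam ∈ Δi i := by simpa [hG] using hlam (i₀ + 1)
    obtain ⟨i₁, hi₁, h₁⟩ := h1
    exact Set.disjoint_left.mp (hdisj (by omega : i₀ ≠ i₁)) h₀ h₁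
  -- decomposition of F Δ
  have hdecomp : ∀ n, F Δ = (∑ i ∈ Finset.range n, F (Δi i)) + F (G n) := by
    intro n
    induction n with
    | zero => simp [hG0]
    | succ n ih =>
      rw [Finset.sum_range_succ, ih, hGsucc n,
        povm_add F hF (hmeas n) (hGmeas (n + 1)) (hGdisj n)]
      abel
  -- positivity of F on measurable sets
  have hFpos : ∀ S : Set ℝ, MeasurableSet S → (0 : H →L[ℂ] H) ≤ F S := by
    intro S hS
    rw [ContinuousLinearMap.nonneg_iff_isPositive]
    refine ⟨(hF.1 S hS).isSymmetric, fun x => ?_⟩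
    rw [ContinuousLinearMap.reApplyInnerSelf_apply, inner_re_symm]
    exact hF.2.1 S hS x
  -- ν x Λ is finite, with total mass ‖x‖ ^ 2
  have hΛmeas : MeasurableSet Λ := hΛ.isClosed.measurableSet
  have hνΛ : ∀ x : H, ν x Λ = ENNReal.ofReal (‖x‖ ^ 2) := by
    intro x
    rw [hν x Λ hΛmeas, hEΛ]
    have hx : (⟪x, x⟫).re = ‖x‖ ^ 2 := by
      rw [← RCLike.re_to_complex]; exact inner_self_eq_norm_sq x
    rw [ContinuousLinearMap.one_apply, hx]
  -- quadratic form bound from a pointwise bound of μ on Λ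
  have hquad : ∀ (S : Set ℝ) (hS : MeasurableSet S) (c : ℝ), 0 ≤ c →
      (∀ lam ∈ Λ, μ S lam ≤ c) → ∀ x : H, (⟪x, F S x⟫).re ≤ c * ‖x‖ ^ 2 := by
    intro S hS c hc hb x
    rw [hrep S hS x]
    have hμnn : ∀ lam, 0 ≤ μ S lam := fun lam => by
      rw [hμP lam S hS]; exact ENNReal.toReal_nonneg
    have hfin : ν x Λ < ⊤ := by rw [hνΛ x]; exact ENNReal.ofReal_lt_top
    have hbound : ‖∫ lam in Λ, μ S lam ∂(ν x)‖ ≤ c * ((ν x) Λ).toReal :=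
      norm_setIntegral_le_of_norm_le_const hfin
        (fun lam hlam => by rw [Real.norm_eq_abs, abs_of_nonneg (hμnn lam)]; exact hb lam hlam)
    calc ∫ lam in Λ, μ S lam ∂(ν x) ≤ ‖∫ lam in Λ, μ S lam ∂(ν x)‖ := le_abs_self _
      _ ≤ c * ((ν x) Λ).toReal := hbound
      _ = c * ‖x‖ ^ 2 := by rw [hνΛ x, ENNReal.toReal_ofReal (by positivity)]
  -- Loewner order bound from a pointwise bound of μ on Λ
  have hop : ∀ (S : Set ℝ) (hS : MeasurableSet S) (c : ℝ), 0 ≤ c →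
      (∀ lam ∈ Λ, μ S lam ≤ c) → ‖F S‖ ≤ c := by
    intro S hS c hc hb
    have hle : F S ≤ (c : ℂ) • 1 := by
      rw [ContinuousLinearMap.le_def]
      constructor
      · refine (IsSelfAdjoint.sub ?_ (hF.1 S hS)).isSymmetric
        exact IsSelfAdjoint.smul (Complex.conj_ofReal c) (IsSelfAdjoint.one _)
      · intro x
        rw [ContinuousLinearMap.reApplyInnerSelf_apply, RCLike.re_to_complex]
        have hre : (⟪((c : ℂ) • (1 : H →L[ℂ] H) - F S) x, x⟫).re
            = c * ‖x‖ ^ 2 - (⟪x, F S x⟫).re := by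
          simp only [ContinuousLinearMap.sub_apply, ContinuousLinearMap.smul_apply,
            ContinuousLinearMap.one_apply, inner_sub_left, inner_smul_left]
          rw [Complex.sub_re]
          have hx : (⟪x, x⟫).re = ‖x‖ ^ 2 := by
            rw [← RCLike.re_to_complex]; exact inner_self_eq_norm_sq x
          congr 1
          · simp [Complex.mul_re, hx]; left; rw [← Complex.ofReal_pow, Complex.ofReal_re]
          · rw [← inner_conj_symm, Complex.conj_re]
        rw [hre]
        have := hquad S hS c hc hb x
        linarith
    calc ‖F S‖ ≤ ‖(c : ℂ) • (1 : H →L[ℂ] H)‖ :=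
          CStarAlgebra.norm_le_norm_of_nonneg_of_le (hFpos S hS) hle
      _ ≤ c := by
          rw [norm_smul, Complex.norm_real, Real.norm_eq_abs, abs_of_nonneg hc]
          exact mul_le_of_le_one_right hc ContinuousLinearMap.norm_id_le
  -- monotonicity of μ along the tails
  have hμmono : ∀ (lam : ℝ) {m n : ℕ}, m ≤ n → μ (G n) lam ≤ μ (G m) lam := by
    intro lam m n hmn
    haveI := hP lam
    rw [hμP lam (G n) (hGmeas n), hμP lam (G m) (hGmeas m)]
    exact ENNReal.toReal_mono (measure_ne_top _ _) (measure_mono (hGanti hmn))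
  -- uniform smallness of μ (G n) on Λ
  have hunif : ∀ ε : ℝ, 0 < ε → ∃ N : ℕ, ∀ n ≥ N, ∀ lam ∈ Λ, μ (G n) lam ≤ ε := by
    intro ε hε
    set V : ℕ → Set ℝ := fun n => {lam | μ (G n) lam < ε} with hV
    have hVopen : ∀ n, IsOpen (V n) :=
      fun n => isOpen_lt (hfeller (G n) (hGmeas n)) continuous_const
    have hcover : Λ ⊆ ⋃ n, V n := by
      intro lam _
      haveI := hP lam
      have htend : Tendsto (fun n => P lam (G n)) atTop (𝓝 0) := by
        have := tendsto_measure_iInter_atTop (μ := P lam)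
          (fun n => (hGmeas n).nullMeasurableSet) hGanti ⟨0, measure_ne_top _ _⟩
        rwa [hGempty, measure_empty] at this
      have htendR : Tendsto (fun n => μ (G n) lam) atTop (𝓝 0) := by
        have := (ENNReal.tendsto_toReal (by simp)).comp htend
        simp only [Function.comp_def, ENNReal.toReal_zero] at this
        refine this.congr fun n => ?_
        rw [hμP lam (G n) (hGmeas n)]
      have hev : ∀ᶠ n in atTop, μ (G n) lam < ε := htendR.eventually_lt_const hε
      obtain ⟨n, hn⟩ := hev.exists
      exact Set.mem_iUnion.2 ⟨n, hn⟩
    obtain ⟨t, ht⟩ := hΛ.elim_finite_subcover V hVopen hcover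
    refine ⟨t.sup id, fun n hn lam hlam => ?_⟩
    obtain ⟨i, hit, hi⟩ := Set.mem_iUnion₂.mp (ht hlam)
    have hiN : i ≤ n := le_trans (Finset.le_sup (f := id) hit) hn
    exact le_of_lt (lt_of_le_of_lt (hμmono lam hiN) hi)
  -- conclusion
  have htail : Tendsto (fun n => F (G n)) atTop (𝓝 0) := by
    rw [NormedAddCommGroup.tendsto_nhds_zero]
    intro ε hε
    obtain ⟨N, hN⟩ := hunif (ε / 2) (by positivity)
    filter_upwards [eventually_ge_atTop N] with n hn
    have := hop (G n) (hGmeas n) (ε / 2) (by positivity) (hN n hn)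
    linarith
  have := tendsto_const_nhds (x := F Δ) (f := atTop (α := ℕ)) |>.sub htail
  rw [sub_zero] at this
  exact this.congr fun n => (eq_sub_of_add_eq (hdecomp n).symm).symm
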